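/- For integer M ≥ 2, nonnegative integer n, and real ν with 0 < ν < M, the terminating hypergeometric evaluation ₂F₁(-n, n+M-1; M-ν/2; 1) = (-ν/2 - n + 1)_n / (M - ν/2)_n holds, and consequently ∫_0^∞ u^{ν-1} ξ^{(ν,M)}_{n,0}(u) du = (-1)^n π^{M/2} Γ(ν/2+n)/Γ(M-ν/2+n) · sqrt((n+(M-1)/2) Γ(n+M-1)/n!). -/

import Mathlib

open Finset Real Set MeasureTheory

/-- Pochhammer (rising factorial) `(a)_k`. -/
noncomputable def poch (a : ℝ) (k : ℕ) : ℝ := ∏ i ∈ Finset.range k, (a + i)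



lemma poch_zero (a : ℝ) : poch a 0 = 1 := by simp [poch]

lemma poch_succ (a : ℝ) (k : ℕ) : poch a (k + 1) = poch a k * (a + k) := by
  simp [poch, Finset.prod_range_succ]

lemma poch_succ' (a : ℝ) (k : ℕ) : poch a (k + 1) = a * poch (a + 1) k := by
  rw [poch, Finset.prod_range_succ', mul_comm]
  simp only [Nat.cast_zero, add_zero]
  congr 1
  apply Finset.prod_congr rfl
  intro i _
  push_cast; ring

lemma poch_pos {a : ℝ} (ha : 0 < a) (k : ℕ) : 0 < poch a k := by
  induction k with
  | zero => simp [poch]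
  | succ k ih => rw [poch_succ]; positivity

lemma poch_add (a : ℝ) (m k : ℕ) : poch a (m + k) = poch a m * poch (a + m) k := by
  rw [poch, Finset.prod_range_add, poch, poch]
  congr 1
  apply Finset.prod_congr rfl
  intro i _
  push_cast; ring

lemma Gamma_poch {a : ℝ} (ha : 0 < a) (k : ℕ) :
    Real.Gamma (a + k) = Real.Gamma a * poch a k := by
  induction k with
  | zero => simp [poch]
  | succ k ih =>
    have h1 : a + (k + 1 : ℕ) = (a + k) + 1 := by push_cast; ring
    rw [h1, Real.Gamma_add_one (by positivity), ih, poch_succ]; ring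

lemma prod_neg_eq (g : ℕ → ℝ) (n : ℕ) :
    ∏ i ∈ range n, -(g i) = (-1) ^ n * ∏ i ∈ range n, g i := by
  have : ∀ i ∈ range n, -(g i) = (-1) * g i := by intro i _; ring
  rw [Finset.prod_congr rfl this, Finset.prod_mul_distrib, Finset.prod_const, Finset.card_range]

lemma poch_reflect (a : ℝ) (n : ℕ) : poch (-a - n + 1) n = (-1) ^ n * poch a n := by
  rw [poch, poch, ← prod_neg_eq (fun i => a + i) n,
    ← Finset.prod_range_reflect (fun i => -(a + i)) n]
  apply Finset.prod_congr rfl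
  intro i hi
  have hin : i < n := Finset.mem_range.mp hi
  have hc : ((n - 1 - i : ℕ) : ℝ) = (n : ℝ) - 1 - i := by
    rw [Nat.sub_sub, Nat.cast_sub (by omega : 1 + i ≤ n)]
    push_cast; ring
  rw [hc]; ring

lemma poch_neg_nat (n k : ℕ) (hk : k ≤ n) :
    poch (-(n : ℝ)) k = (-1) ^ k * (n.choose k) * k.factorial := by
  have h1 : poch (-(n : ℝ)) k = (-1) ^ k * ∏ i ∈ range k, ((n : ℝ) - i) := by
    rw [poch, ← prod_neg_eq (fun i => (n : ℝ) - i) k]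
    apply Finset.prod_congr rfl
    intro i _; ring
  have h2 : ∏ i ∈ range k, ((n : ℝ) - i) = (n.descFactorial k : ℝ) := by
    rw [Nat.descFactorial_eq_prod_range, Nat.cast_prod]
    apply Finset.prod_congr rfl
    intro i hi
    have : i < k := Finset.mem_range.mp hi
    have : i ≤ n := by omega
    rw [Nat.cast_sub this]
  have h3 : (n.descFactorial k : ℝ) = (k.factorial : ℝ) * (n.choose k : ℝ) := by
    rw [Nat.descFactorial_eq_factorial_mul_choose]; push_cast; ring
  rw [h1, h2, h3]; ring

lemma vander (n : ℕ) : ∀ b c : ℝ,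
    ∑ k ∈ range (n + 1), (-1 : ℝ) ^ k * (n.choose k) * poch b k * poch (c + k) (n - k)
      = poch (c - b) n := by
  induction n with
  | zero => intro b c; simp [poch]
  | succ n ih =>
    intro b c
    have hh : ∀ j ∈ range (n + 1),
        (-1 : ℝ) ^ j * (n.choose j) * poch b j * poch (c + j) (n + 1 - j)
          = (-1 : ℝ) ^ j * (n.choose j) * poch b j * ((c + j) * poch (c + 1 + j) (n - j)) := by
      intro j hj
      have hjn : j ≤ n := by have := Finset.mem_range.mp hj; omega
      have : n + 1 - j = (n - j) + 1 := by omega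
      rw [this, poch_succ']
      have : c + (j : ℝ) + 1 = c + 1 + j := by ring
      rw [this]
    have hfh : ∀ k ∈ Finset.range (n+1),
        (fun k => (-1:ℝ)^k * (((n+1).choose k) : ℝ) * poch b k * poch (c + (k:ℝ)) (n + 1 - k)) (k+1)
          = (fun j => (-1:ℝ)^j * ((n.choose j) : ℝ) * poch b j * poch (c + (j:ℝ)) (n + 1 - j)) (k+1)
            - (-1:ℝ)^k * ((n.choose k) : ℝ) * poch b k * (b + (k:ℝ)) * poch (c + 1 + (k:ℝ)) (n - k) := by
      intro k hk
      show (-1:ℝ)^(k+1) * (((n+1).choose (k+1)) : ℝ) * poch b (k+1) * poch (c + ((k+1:ℕ):ℝ)) (n + 1 - (k+1))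
        = (-1:ℝ)^(k+1) * ((n.choose (k+1)) : ℝ) * poch b (k+1) * poch (c + ((k+1:ℕ):ℝ)) (n + 1 - (k+1))
          - (-1:ℝ)^k * ((n.choose k) : ℝ) * poch b k * (b + (k:ℝ)) * poch (c + 1 + (k:ℝ)) (n - k)
      have h1 : n + 1 - (k+1) = n - k := by omega
      have h2 : c + ((k+1:ℕ):ℝ) = c + 1 + (k:ℝ) := by push_cast; ring
      rw [h1, h2, Nat.choose_succ_succ, poch_succ]
      push_cast
      ring
    set f : ℕ → ℝ := fun k => (-1:ℝ)^k * (((n+1).choose k) : ℝ) * poch b k * poch (c + (k:ℝ)) (n + 1 - k) with hfdef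
    set h : ℕ → ℝ := fun j => (-1:ℝ)^j * ((n.choose j) : ℝ) * poch b j * poch (c + (j:ℝ)) (n + 1 - j) with hhdef
    have hsum1 : ∑ k ∈ Finset.range (n+1+1), f k = ∑ k ∈ Finset.range (n+1), f (k+1) + f 0 :=
      Finset.sum_range_succ' f (n+1)
    have hsum2 : ∑ j ∈ Finset.range (n+1+1), h j = ∑ k ∈ Finset.range (n+1), h (k+1) + h 0 :=
      Finset.sum_range_succ' h (n+1)
    have hsum3 : ∑ j ∈ Finset.range (n+1+1), h j = ∑ j ∈ Finset.range (n+1), h j + h (n+1) :=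
      Finset.sum_range_succ h (n+1)
    have hhn1 : h (n+1) = 0 := by
      show (-1:ℝ)^(n+1) * ((n.choose (n+1)) : ℝ) * poch b (n+1) * poch (c + ((n+1:ℕ):ℝ)) (n + 1 - (n+1)) = 0
      rw [Nat.choose_succ_self]
      norm_num
    have hf0 : f 0 = h 0 := by
      show (-1:ℝ)^0 * (((n+1).choose 0) : ℝ) * poch b 0 * poch (c + ((0:ℕ):ℝ)) (n + 1 - 0)
        = (-1:ℝ)^0 * ((n.choose 0) : ℝ) * poch b 0 * poch (c + ((0:ℕ):ℝ)) (n + 1 - 0)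
      norm_num
    have hhg : ∀ j ∈ Finset.range (n+1), h j - (-1:ℝ)^j * ((n.choose j) : ℝ) * poch b j * (b + (j:ℝ)) * poch (c + 1 + (j:ℝ)) (n - j)
        = (c - b) * ((-1:ℝ)^j * ((n.choose j) : ℝ) * poch b j * poch ((c+1) + (j:ℝ)) (n - j)) := by
      intro j hj
      have := hh j hj
      show (-1:ℝ)^j * ((n.choose j) : ℝ) * poch b j * poch (c + (j:ℝ)) (n + 1 - j)
          - (-1:ℝ)^j * ((n.choose j) : ℝ) * poch b j * (b + (j:ℝ)) * poch (c + 1 + (j:ℝ)) (n - j) = _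
      rw [this]
      ring
    calc ∑ k ∈ Finset.range (n+1+1), f k
        = ∑ k ∈ Finset.range (n+1), f (k+1) + f 0 := hsum1
      _ = (∑ k ∈ Finset.range (n+1), (h (k+1) - (-1:ℝ)^k * ((n.choose k) : ℝ) * poch b k * (b + (k:ℝ)) * poch (c + 1 + (k:ℝ)) (n - k))) + h 0 := by
            rw [Finset.sum_congr rfl hfh, hf0]
      _ = (∑ k ∈ Finset.range (n+1), h (k+1) + h 0)
            - ∑ k ∈ Finset.range (n+1), (-1:ℝ)^k * ((n.choose k) : ℝ) * poch b k * (b + (k:ℝ)) * poch (c + 1 + (k:ℝ)) (n - k) := by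
            rw [Finset.sum_sub_distrib]; ring
      _ = (∑ j ∈ Finset.range (n+1), h j + h (n+1))
            - ∑ k ∈ Finset.range (n+1), (-1:ℝ)^k * ((n.choose k) : ℝ) * poch b k * (b + (k:ℝ)) * poch (c + 1 + (k:ℝ)) (n - k) := by
            rw [← hsum2, hsum3]
      _ = ∑ j ∈ Finset.range (n+1), (h j - (-1:ℝ)^j * ((n.choose j) : ℝ) * poch b j * (b + (j:ℝ)) * poch (c + 1 + (j:ℝ)) (n - j)) := by
            rw [hhn1, Finset.sum_sub_distrib]; ring
      _ = ∑ j ∈ Finset.range (n+1), (c - b) * ((-1:ℝ)^j * ((n.choose j) : ℝ) * poch b j * poch ((c+1) + (j:ℝ)) (n - j)) :=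
            Finset.sum_congr rfl hhg
      _ = (c - b) * ∑ j ∈ Finset.range (n+1), (-1:ℝ)^j * ((n.choose j) : ℝ) * poch b j * poch ((c+1) + (j:ℝ)) (n - j) :=
            (Finset.mul_sum _ _ _).symm
      _ = (c - b) * poch (c + 1 - b) n := by rw [ih b (c+1)]
      _ = poch (c - b) (n+1) := by
            rw [poch_succ']
            have : c + 1 - b = c - b + 1 := by ring
            rw [this]


/-- Terminating Gauss hypergeometric series `₂F₁(-n, b; c; x)`. -/
noncomputable def F21fin (n : ℕ) (b c x : ℝ) : ℝ :=
  ∑ k ∈ Finset.range (n + 1),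
    poch (-(n : ℝ)) k * poch b k / (poch c k * k.factorial) * x ^ k

lemma F21fin_one (n : ℕ) (b c : ℝ) (hc : 0 < c) :
    F21fin n b c 1 = poch (c - b) n / poch c n := by
  rw [eq_div_iff (poch_pos hc n).ne', F21fin, Finset.sum_mul, ← vander n b c]
  apply Finset.sum_congr rfl
  intro k hk
  have hk' : k ≤ n := by have := Finset.mem_range.mp hk; omega
  have h1 : poch c n = poch c k * poch (c + k) (n - k) := by
    rw [← poch_add]; congr 1; omega
  rw [one_pow, mul_one, h1, poch_neg_nat n k hk']
  have hck : poch c k ≠ 0 := (poch_pos hc k).ne'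
  have hkf : (k.factorial : ℝ) ≠ 0 := by positivity
  field_simp


/-- Terminating generalized hypergeometric series `₂F₂(-n, b; c, d; z)`. -/
noncomputable def F22fin (n : ℕ) (b c d z : ℝ) : ℝ :=
  ∑ k ∈ Finset.range (n + 1),
    poch (-(n : ℝ)) k * poch b k / (poch c k * poch d k * k.factorial) * z ^ k

/-- The functions `ξ^{(ν,M)}_{n,l}(u)` (complex-valued because of the factor `i^l`). -/
noncomputable def xi (ν : ℝ) (M n l : ℕ) (u : ℝ) : ℂ :=
  Complex.I ^ l *
    ((2 * Real.pi ^ ((M : ℝ) / 2) * u ^ l /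
          (Real.Gamma ((l : ℝ) + M / 2) * Real.Gamma ((l : ℝ) + M - ν / 2)) *
        Real.sqrt (((n : ℝ) + l + ((M : ℝ) - 1) / 2) *
          Real.Gamma ((n : ℝ) + 2 * l + M - 1) / n.factorial) *
        ∫ z in Set.Ioi (0 : ℝ),
          Real.exp (-z - u ^ 2 / z) * z ^ (((M : ℝ) - ν) / 2 - 1) *
            F22fin n ((n : ℝ) + 2 * l + M - 1) ((l : ℝ) + M / 2)
              ((l : ℝ) + M - ν / 2) z : ℝ) : ℂ)

lemma exp_bound {u z : ℝ} (hu : 0 < u) (hz : 0 < z) :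
    -z - u ^ 2 / z ≤ -u + -(1/2) * z := by
  have h1 : u - z / 2 ≤ u ^ 2 / z := by
    rw [le_div_iff₀ hz]
    nlinarith [sq_nonneg (u - z)]
  linarith

lemma sect_int {s : ℝ} (hs : -1 < s) (u : ℝ) :
    IntegrableOn (fun z => Real.exp (-z - u ^ 2 / z) * z ^ s) (Ioi (0:ℝ)) := by
  have hbase : IntegrableOn (fun z : ℝ => z ^ s * Real.exp (-(1:ℝ) * z ^ (1:ℝ))) (Ioi 0) :=
    integrableOn_rpow_mul_exp_neg_mul_rpow hs one_pos one_pos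
  apply Integrable.mono' hbase
  · apply Measurable.aestronglyMeasurable
    exact ((measurable_id'.neg.sub ((measurable_const.pow measurable_const).div
      measurable_id')).exp.mul (measurable_id'.pow measurable_const))
  · filter_upwards [ae_restrict_mem measurableSet_Ioi] with z hz
    have hz' : (0:ℝ) < z := hz
    rw [Real.norm_eq_abs, abs_of_nonneg (by positivity), Real.rpow_one]
    have : Real.exp (-z - u ^ 2 / z) ≤ Real.exp (-(1:ℝ) * z) := by
      apply Real.exp_le_exp.mpr
      have : 0 ≤ u ^ 2 / z := by positivity
      linarith
    calc Real.exp (-z - u ^ 2 / z) * z ^ s ≤ Real.exp (-(1:ℝ) * z) * z ^ s := by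
          apply mul_le_mul_of_nonneg_right this (by positivity)
      _ = z ^ s * Real.exp (-(1:ℝ) * z) := by ring

lemma inner_u {ν : ℝ} (hν : 0 < ν) {z : ℝ} (hz : 0 < z) :
    ∫ u in Ioi (0:ℝ), u ^ (ν - 1) * Real.exp (-(u ^ 2) / z)
      = z ^ (ν/2) * ((1/2) * Real.Gamma (ν/2)) := by
  have h := integral_rpow_mul_exp_neg_mul_rpow (p := 2) (q := ν - 1) (b := 1/z)
    two_pos (by linarith) (by positivity)
  rw [show ν - 1 + 1 = ν by ring] at h
  have heq : ∀ x ∈ Ioi (0:ℝ), x ^ (ν - 1) * Real.exp (-(1/z) * x ^ (2:ℝ))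
      = x ^ (ν - 1) * Real.exp (-(x ^ 2) / z) := by
    intro x hx
    have hx' : (0:ℝ) < x := hx
    rw [show (2:ℝ) = ((2:ℕ):ℝ) by norm_num, Real.rpow_natCast]
    congr 2
    field_simp
  rw [setIntegral_congr_fun measurableSet_Ioi heq] at h
  rw [h, one_div, ← Real.rpow_neg_one, ← Real.rpow_mul hz.le,
    show ((-1:ℝ) * (-ν/2)) = ν/2 from by ring]
  ring

lemma J_integrable {ν s : ℝ} (hν : 0 < ν) (hs : -1 < s) :
    Integrable (Function.uncurry fun u z : ℝ => u ^ (ν - 1) * (Real.exp (-z - u ^ 2 / z) * z ^ s))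
      ((volume.restrict (Ioi (0:ℝ))).prod (volume.restrict (Ioi (0:ℝ)))) := by
  have hg1 : IntegrableOn (fun u : ℝ => u ^ (ν - 1) * Real.exp (-u)) (Ioi (0:ℝ)) := by
    have h := Real.GammaIntegral_convergent hν
    exact h.congr_fun (fun x _ => by ring) measurableSet_Ioi
  have hg2 : IntegrableOn (fun z : ℝ => z ^ s * Real.exp (-(1/2) * z)) (Ioi (0:ℝ)) := by
    have h := integrableOn_rpow_mul_exp_neg_mul_rpow hs one_pos (by norm_num : (0:ℝ) < 1/2)
    exact h.congr_fun (fun z _ => by simp only [Real.rpow_one]) measurableSet_Ioi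
  have hg : Integrable
      (fun p : ℝ × ℝ => (p.1 ^ (ν - 1) * Real.exp (-p.1)) * (p.2 ^ s * Real.exp (-(1/2) * p.2)))
      ((volume.restrict (Ioi (0:ℝ))).prod (volume.restrict (Ioi (0:ℝ)))) :=
    hg1.mul_prod hg2
  apply hg.mono'
  · apply Measurable.aestronglyMeasurable
    exact (measurable_fst.pow measurable_const).mul
      (((measurable_snd.neg.sub ((measurable_fst.pow measurable_const).div
        measurable_snd)).exp).mul (measurable_snd.pow measurable_const))
  · rw [Measure.prod_restrict]
    filter_upwards [ae_restrict_mem (measurableSet_Ioi.prod measurableSet_Ioi)] with p hp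
    obtain ⟨hu, hz⟩ := Set.mem_prod.mp hp
    have hu' : (0:ℝ) < p.1 := hu
    have hz' : (0:ℝ) < p.2 := hz
    rw [Function.uncurry, Real.norm_eq_abs, abs_of_nonneg (by positivity)]
    calc p.1 ^ (ν - 1) * (Real.exp (-p.2 - p.1 ^ 2 / p.2) * p.2 ^ s)
        = (p.1 ^ (ν - 1) * p.2 ^ s) * Real.exp (-p.2 - p.1 ^ 2 / p.2) := by ring
      _ ≤ (p.1 ^ (ν - 1) * p.2 ^ s) * Real.exp (-p.1 + -(1/2) * p.2) := by
          apply mul_le_mul_of_nonneg_left _ (by positivity)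
          exact Real.exp_le_exp.mpr (exp_bound hu' hz')
      _ = (p.1 ^ (ν - 1) * Real.exp (-p.1)) * (p.2 ^ s * Real.exp (-(1/2) * p.2)) := by
          rw [Real.exp_add]; ring

lemma key_int {ν s : ℝ} (hν : 0 < ν) (hs : -1 < s) :
    ∫ u in Ioi (0:ℝ), u ^ (ν - 1) * ∫ z in Ioi (0:ℝ), Real.exp (-z - u ^ 2 / z) * z ^ s
      = (1/2) * Real.Gamma (ν/2) * Real.Gamma (s + ν/2 + 1) := by
  have h1 : ∫ u in Ioi (0:ℝ), u ^ (ν - 1) * ∫ z in Ioi (0:ℝ), Real.exp (-z - u ^ 2 / z) * z ^ s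
      = ∫ u in Ioi (0:ℝ), ∫ z in Ioi (0:ℝ), u ^ (ν - 1) * (Real.exp (-z - u ^ 2 / z) * z ^ s) := by
    apply setIntegral_congr_fun measurableSet_Ioi
    intro u _
    simp only []
    rw [integral_const_mul]
  rw [h1, integral_integral_swap (J_integrable hν hs)]
  have h2 : ∀ z ∈ Ioi (0:ℝ),
      (∫ u in Ioi (0:ℝ), u ^ (ν - 1) * (Real.exp (-z - u ^ 2 / z) * z ^ s))
        = ((1/2) * Real.Gamma (ν/2)) * (Real.exp (-z) * z ^ (s + ν/2)) := by
    intro z hz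
    have hz' : (0:ℝ) < z := hz
    have e1 : ∀ u ∈ Ioi (0:ℝ), u ^ (ν - 1) * (Real.exp (-z - u ^ 2 / z) * z ^ s)
        = (Real.exp (-z) * z ^ s) * (u ^ (ν - 1) * Real.exp (-(u ^ 2) / z)) := by
      intro u _
      rw [show -z - u ^ 2 / z = (-z) + (-(u ^ 2 / z)) from by ring, Real.exp_add, neg_div]
      ring
    rw [setIntegral_congr_fun measurableSet_Ioi e1, integral_const_mul, inner_u hν hz',
      Real.rpow_add hz']
    ring
  rw [setIntegral_congr_fun measurableSet_Ioi h2, integral_const_mul,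
    Real.Gamma_eq_integral (by linarith : (0:ℝ) < s + ν/2 + 1),
    show s + ν/2 + 1 - 1 = s + ν/2 from by ring]

theorem stmt11 (M : ℕ) (hM : 2 ≤ M) (n : ℕ) (ν : ℝ) (hν0 : 0 < ν) (hνM : ν < M) :
    F21fin n ((n : ℝ) + M - 1) ((M : ℝ) - ν / 2) 1 =
        poch (-(ν / 2) - n + 1) n / poch ((M : ℝ) - ν / 2) n ∧
      ∫ u in Set.Ioi (0 : ℝ), (u ^ (ν - 1) : ℝ) • xi ν M n 0 u =
        (((-1 : ℝ) ^ n * Real.pi ^ ((M : ℝ) / 2) * Real.Gamma (ν / 2 + n) /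
            Real.Gamma ((M : ℝ) - ν / 2 + n) *
            Real.sqrt (((n : ℝ) + ((M : ℝ) - 1) / 2) * Real.Gamma ((n : ℝ) + M - 1) /
              n.factorial) : ℝ) : ℂ) := by
  have hM2 : (2:ℝ) ≤ (M:ℝ) := by exact_mod_cast hM
  have hνM' : ν < (M:ℝ) := hνM
  have hc : (0:ℝ) < (M:ℝ) - ν/2 := by linarith
  have hM2pos : (0:ℝ) < (M:ℝ)/2 := by linarith
  have hν2 : (0:ℝ) < ν/2 := by linarith
  have hpart1 : F21fin n ((n : ℝ) + M - 1) ((M : ℝ) - ν / 2) 1 =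
      poch (-(ν / 2) - n + 1) n / poch ((M : ℝ) - ν / 2) n := by
    rw [F21fin_one n _ _ hc]
    have h : (M:ℝ) - ν/2 - ((n:ℝ) + M - 1) = -(ν/2) - n + 1 := by ring
    rw [h]
  refine ⟨hpart1, ?_⟩
  have htk : ∀ k : ℕ, (-1:ℝ) < (((M:ℝ) - ν)/2 - 1) + k := by
    intro k
    have : (0:ℝ) ≤ (k:ℝ) := Nat.cast_nonneg k
    linarith
  set b : ℝ := (n:ℝ) + M - 1 with hb_def
  set c : ℝ := (M:ℝ) - ν/2 with hc_def
  set S : ℝ := Real.sqrt (((n : ℝ) + ((M : ℝ) - 1) / 2) * Real.Gamma b / n.factorial) with hS_def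
  set C : ℝ := 2 * Real.pi ^ ((M : ℝ) / 2) / (Real.Gamma ((M:ℝ) / 2) * Real.Gamma c) * S
    with hC_def
  -- step 1: termwise expansion of the z-integral, multiplied by u ^ (ν-1)
  have hA : ∀ u ∈ Set.Ioi (0:ℝ),
      u ^ (ν - 1) * ∫ z in Set.Ioi (0:ℝ),
          Real.exp (-z - u^2/z) * z ^ (((M:ℝ) - ν)/2 - 1) * F22fin n b ((M:ℝ)/2) c z
      = ∑ k ∈ Finset.range (n+1),
          (poch (-(n:ℝ)) k * poch b k / (poch ((M:ℝ)/2) k * poch c k * k.factorial)) *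
            (u ^ (ν - 1) * ∫ z in Set.Ioi (0:ℝ),
              Real.exp (-z - u^2/z) * z ^ ((((M:ℝ) - ν)/2 - 1) + k)) := by
    intro u _
    have hzint : ∀ z ∈ Set.Ioi (0:ℝ),
        Real.exp (-z - u^2/z) * z ^ (((M:ℝ) - ν)/2 - 1) * F22fin n b ((M:ℝ)/2) c z
        = ∑ k ∈ Finset.range (n+1),
            (poch (-(n:ℝ)) k * poch b k / (poch ((M:ℝ)/2) k * poch c k * k.factorial)) *
              (Real.exp (-z - u^2/z) * z ^ ((((M:ℝ) - ν)/2 - 1) + k)) := by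
      intro z hz
      have hz' : (0:ℝ) < z := hz
      rw [F22fin, Finset.mul_sum]
      apply Finset.sum_congr rfl
      intro k _
      rw [Real.rpow_add hz', Real.rpow_natCast]
      ring
    rw [setIntegral_congr_fun measurableSet_Ioi hzint,
      integral_finset_sum _ (fun k _ => ((sect_int (htk k) u).const_mul _)),
      Finset.mul_sum]
    apply Finset.sum_congr rfl
    intro k _
    rw [integral_const_mul]
    ring
  have hint_each : ∀ k : ℕ, Integrable
      (fun u => u ^ (ν - 1) * ∫ z in Set.Ioi (0:ℝ),
        Real.exp (-z - u^2/z) * z ^ ((((M:ℝ) - ν)/2 - 1) + k))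
      (volume.restrict (Set.Ioi 0)) := by
    intro k
    have h := (J_integrable hν0 (htk k)).integral_prod_left
    refine h.congr (Filter.Eventually.of_forall fun u => ?_)
    simp only [Function.uncurry]
    rw [integral_const_mul]
  have hGamma_k : ∀ k : ℕ, (∫ u in Set.Ioi (0:ℝ), u ^ (ν - 1) * ∫ z in Set.Ioi (0:ℝ),
        Real.exp (-z - u^2/z) * z ^ ((((M:ℝ) - ν)/2 - 1) + k))
      = (1/2) * Real.Gamma (ν/2) * (Real.Gamma ((M:ℝ)/2) * poch ((M:ℝ)/2) k) := by
    intro k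
    rw [key_int hν0 (htk k),
      show (((M:ℝ) - ν)/2 - 1) + k + ν/2 + 1 = (M:ℝ)/2 + k from by push_cast; ring,
      Gamma_poch hM2pos k]
  have hcore : (∫ u in Set.Ioi (0:ℝ), u ^ (ν - 1) * ∫ z in Set.Ioi (0:ℝ),
        Real.exp (-z - u^2/z) * z ^ (((M:ℝ) - ν)/2 - 1) * F22fin n b ((M:ℝ)/2) c z)
      = (1/2) * Real.Gamma (ν/2) * Real.Gamma ((M:ℝ)/2) * F21fin n b c 1 := by
    rw [setIntegral_congr_fun measurableSet_Ioi hA,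
      integral_finset_sum _ (fun k _ => (hint_each k).const_mul _),
      F21fin, Finset.mul_sum]
    apply Finset.sum_congr rfl
    intro k _
    rw [integral_const_mul, hGamma_k k]
    have hpk : poch ((M:ℝ)/2) k ≠ 0 := (poch_pos hM2pos k).ne'
    have hck : poch c k ≠ 0 := (poch_pos hc k).ne'
    have hfk : (k.factorial : ℝ) ≠ 0 := by positivity
    field_simp
    ring
  have hxi : ∀ u : ℝ, (u ^ (ν - 1) : ℝ) • xi ν M n 0 u
      = (((u ^ (ν - 1) * (C * ∫ z in Set.Ioi (0:ℝ),
          Real.exp (-z - u^2/z) * z ^ (((M:ℝ) - ν)/2 - 1) * F22fin n b ((M:ℝ)/2) c z) : ℝ)) : ℂ) := by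
    intro u
    have hx : xi ν M n 0 u = ((C * ∫ z in Set.Ioi (0:ℝ),
        Real.exp (-z - u^2/z) * z ^ (((M:ℝ) - ν)/2 - 1) * F22fin n b ((M:ℝ)/2) c z : ℝ) : ℂ) := by
      simp only [xi, pow_zero, one_mul, Nat.cast_zero, mul_zero, add_zero, zero_add, mul_one,
        hC_def, hS_def, hb_def, hc_def]
    rw [hx, Complex.real_smul, ← Complex.ofReal_mul]
  rw [setIntegral_congr_fun measurableSet_Ioi (fun u _ => hxi u)]
  have hIR : (∫ u in Set.Ioi (0:ℝ), ((u ^ (ν - 1) * (C * ∫ z in Set.Ioi (0:ℝ),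
      Real.exp (-z - u^2/z) * z ^ (((M:ℝ) - ν)/2 - 1) * F22fin n b ((M:ℝ)/2) c z) : ℝ) : ℂ))
      = ((∫ u in Set.Ioi (0:ℝ), u ^ (ν - 1) * (C * ∫ z in Set.Ioi (0:ℝ),
      Real.exp (-z - u^2/z) * z ^ (((M:ℝ) - ν)/2 - 1) * F22fin n b ((M:ℝ)/2) c z) : ℝ) : ℂ) :=
    integral_ofReal
  rw [hIR]
  congr 1
  have hfun : (fun u : ℝ => u ^ (ν - 1) * (C * ∫ z in Set.Ioi (0:ℝ),
      Real.exp (-z - u^2/z) * z ^ (((M:ℝ) - ν)/2 - 1) * F22fin n b ((M:ℝ)/2) c z))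
      = fun u : ℝ => C * (u ^ (ν - 1) * ∫ z in Set.Ioi (0:ℝ),
        Real.exp (-z - u^2/z) * z ^ (((M:ℝ) - ν)/2 - 1) * F22fin n b ((M:ℝ)/2) c z) := by
    funext u; ring
  rw [hfun, integral_const_mul, hcore, hpart1, poch_reflect (ν/2) n,
    Gamma_poch hν2 n, show c + (n:ℝ) = c + (n:ℕ) from by norm_num, Gamma_poch hc n]
  have h1 : Real.Gamma ((M:ℝ)/2) ≠ 0 := (Real.Gamma_pos_of_pos hM2pos).ne'
  have h2 : Real.Gamma c ≠ 0 := (Real.Gamma_pos_of_pos hc).ne'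
  have h3 : poch c n ≠ 0 := (poch_pos hc n).ne'
  have h4 : Real.Gamma (ν/2) ≠ 0 := (Real.Gamma_pos_of_pos hν2).ne'
  rw [hC_def]
  field_simp
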